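/- Let n ≥ 6 and let α, β be distinct positive roots of A_{n−1}. If w ∈ S_n is such that w·(−3α−β) = w(−3α−β+ρ) − ρ is dominant, then w·(−3α−β) = 0. -/

import Mathlib

/-- ρ = (n−1, n−2, …, 1, 0) for type A_{n−1} realized in ℤ^n. -/
def weylRho (n : ℕ) : Fin n → ℤ := fun i => (n : ℤ) - 1 - (i : ℕ)

/-- The action of `w ∈ S_n` on weights: `w(λ)_i = λ_{w⁻¹(i)}`. -/
def wAct {n : ℕ} (w : Equiv.Perm (Fin n)) (lam : Fin n → ℤ) : Fin n → ℤ :=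
  fun i => lam (w⁻¹ i)

/-- The dot action `w·λ = w(λ+ρ) − ρ`. -/
def dotAct {n : ℕ} (w : Equiv.Perm (Fin n)) (lam : Fin n → ℤ) : Fin n → ℤ :=
  fun i => lam (w⁻¹ i) + weylRho n (w⁻¹ i) - weylRho n i

/-- `λ` is dominant iff `λ_1 ≥ λ_2 ≥ ⋯ ≥ λ_n`. -/
def IsDominant {n : ℕ} (lam : Fin n → ℤ) : Prop :=
  ∀ i j : Fin n, i ≤ j → lam j ≤ lam i

/-- The root `e_i − e_j`. -/
def posRoot {n : ℕ} (i j : Fin n) : Fin n → ℤ :=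
  fun k => (if k = i then 1 else 0) - (if k = j then 1 else 0)

/-- Positive roots of A_{n−1}: `e_i − e_j` with `i < j`. -/
def IsPosRoot {n : ℕ} (x : Fin n → ℤ) : Prop :=
  ∃ i j : Fin n, i < j ∧ x = posRoot i j

/-- Negative roots of A_{n−1}. -/
def IsNegRoot {n : ℕ} (x : Fin n → ℤ) : Prop :=
  ∃ i j : Fin n, i < j ∧ x = -(posRoot i j)

/-- The length ℓ(w): the number of positive roots sent to negative roots by `w`,
i.e. the number of inversions of `w`. -/
def weylLen {n : ℕ} (w : Equiv.Perm (Fin n)) : ℕ :=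
  (Finset.univ.filter (fun p : Fin n × Fin n => p.1 < p.2 ∧ w p.2 < w p.1)).card

lemma collide_aux (n : ℕ) (f : ℕ → ℤ)
    (hinj : ∀ m1 m2, m1 < n → m2 < n → f m1 = f m2 → m1 = m2)
    (k1 k2 : ℕ) (h1 : k1 < n) (h2 : k2 < n) (hk : k1 ≠ k2) (he : f k1 = f k2) : False :=
  hk (hinj k1 k2 h1 h2 he)

lemma upper_aux (n A B C D : ℕ) (f : ℕ → ℤ) (hn : 6 ≤ n)
    (hAB : A < B) (hCD : C < D) (hBn : B < n) (hDn : D < n)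
    (hne : ¬(A = C ∧ B = D))
    (hf : ∀ m, m < n → f m = (n : ℤ) - 1 - m
      - (if m = A then 3 else 0) + (if m = B then 3 else 0)
      - (if m = C then 1 else 0) + (if m = D then 1 else 0))
    (hinj : ∀ m1 m2, m1 < n → m2 < n → f m1 = f m2 → m1 = m2) :
    ∀ m, m < n → f m ≤ (n : ℤ) - 1 := by
  intro m hm
  by_contra hviol
  push_neg at hviol
  rw [hf m hm] at hviol
  have hcls : (m = B ∧ m = C ∧ m ≠ D ∧ B = 1 ∧ A = 0) ∨
      (m = B ∧ m = D ∧ m ≠ C ∧ B ≤ 3) ∨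
      (m = B ∧ m ≠ C ∧ m ≠ D ∧ B ≤ 2) := by
    split_ifs at hviol <;> omega
  clear hviol
  rcases hcls with ⟨hmB, hmC, hmD, hB1, hA0⟩ | ⟨hmB, hmD, hmC, hB3⟩ | ⟨hmB, hmC, hmD, hB2⟩
  · -- S1 : B = C = 1, A = 0, D ≥ 2
    have hC1 : C = 1 := by omega
    by_cases hD3 : D = 3
    · exact collide_aux n f hinj (2) (3) (by omega) (by omega) (by omega) (by
        rw [hf (2) (by omega), hf (3) (by omega),
          if_neg (show ¬((2 : ℕ) = A) by omega),
          if_neg (show ¬((2 : ℕ) = B) by omega),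
          if_neg (show ¬((2 : ℕ) = C) by omega),
          if_neg (show ¬((2 : ℕ) = D) by omega),
          if_neg (show ¬((3 : ℕ) = A) by omega),
          if_neg (show ¬((3 : ℕ) = B) by omega),
          if_neg (show ¬((3 : ℕ) = C) by omega),
          if_pos (show (3 : ℕ) = D by omega)]
        omega)
    · exact collide_aux n f hinj (0) (3) (by omega) (by omega) (by omega) (by
        rw [hf (0) (by omega), hf (3) (by omega),
          if_pos (show (0 : ℕ) = A by omega),
          if_neg (show ¬((0 : ℕ) = B) by omega),
          if_neg (show ¬((0 : ℕ) = C) by omega),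
          if_neg (show ¬((0 : ℕ) = D) by omega),
          if_neg (show ¬((3 : ℕ) = A) by omega),
          if_neg (show ¬((3 : ℕ) = B) by omega),
          if_neg (show ¬((3 : ℕ) = C) by omega),
          if_neg (show ¬((3 : ℕ) = D) by omega)]
        omega)
  · -- S2 : B = D ≤ 3
    have hBD : B = D := by omega
    have hAC : A ≠ C := fun h => hne ⟨h, hBD⟩
    by_cases hA3 : A + 3 = B
    · have hA0 : A = 0 := by omega
      have hB3 : B = 3 := by omega
      by_cases hC1 : C = 1
      · exact collide_aux n f hinj (1) (2) (by omega) (by omega) (by omega) (by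
          rw [hf (1) (by omega), hf (2) (by omega),
            if_neg (show ¬((1 : ℕ) = A) by omega),
            if_neg (show ¬((1 : ℕ) = B) by omega),
            if_pos (show (1 : ℕ) = C by omega),
            if_neg (show ¬((1 : ℕ) = D) by omega),
            if_neg (show ¬((2 : ℕ) = A) by omega),
            if_neg (show ¬((2 : ℕ) = B) by omega),
            if_neg (show ¬((2 : ℕ) = C) by omega),
            if_neg (show ¬((2 : ℕ) = D) by omega)]
          omega)
      · exact collide_aux n f hinj (0) (2) (by omega) (by omega) (by omega) (by
          rw [hf (0) (by omega), hf (2) (by omega),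
            if_pos (show (0 : ℕ) = A by omega),
            if_neg (show ¬((0 : ℕ) = B) by omega),
            if_neg (show ¬((0 : ℕ) = C) by omega),
            if_neg (show ¬((0 : ℕ) = D) by omega),
            if_neg (show ¬((2 : ℕ) = A) by omega),
            if_neg (show ¬((2 : ℕ) = B) by omega),
            if_pos (show (2 : ℕ) = C by omega),
            if_neg (show ¬((2 : ℕ) = D) by omega)]
          omega)
    ·
      · exact collide_aux n f hinj (A) (A + 3) (by omega) (by omega) (by omega) (by
          rw [hf (A) (by omega), hf (A + 3) (by omega),
            if_pos (show (A : ℕ) = A by omega),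
            if_neg (show ¬((A : ℕ) = B) by omega),
            if_neg (show ¬((A : ℕ) = C) by omega),
            if_neg (show ¬((A : ℕ) = D) by omega),
            if_neg (show ¬((A + 3 : ℕ) = A) by omega),
            if_neg (show ¬((A + 3 : ℕ) = B) by omega),
            if_neg (show ¬((A + 3 : ℕ) = C) by omega),
            if_neg (show ¬((A + 3 : ℕ) = D) by omega)]
          omega)
  · -- S3 : B ≤ 2, B ∉ {C, D}
    have hBval : B = 1 ∨ B = 2 := by omega
    rcases hBval with hB | hB
    · have hA0 : A = 0 := by omega
      by_cases hC0 : C = 0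
      · by_cases hD4 : D = 4
        · exact collide_aux n f hinj (3) (4) (by omega) (by omega) (by omega) (by
            rw [hf (3) (by omega), hf (4) (by omega),
              if_neg (show ¬((3 : ℕ) = A) by omega),
              if_neg (show ¬((3 : ℕ) = B) by omega),
              if_neg (show ¬((3 : ℕ) = C) by omega),
              if_neg (show ¬((3 : ℕ) = D) by omega),
              if_neg (show ¬((4 : ℕ) = A) by omega),
              if_neg (show ¬((4 : ℕ) = B) by omega),
              if_neg (show ¬((4 : ℕ) = C) by omega),
              if_pos (show (4 : ℕ) = D by omega)]
            omega)
        · exact collide_aux n f hinj (0) (4) (by omega) (by omega) (by omega) (by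
            rw [hf (0) (by omega), hf (4) (by omega),
              if_pos (show (0 : ℕ) = A by omega),
              if_neg (show ¬((0 : ℕ) = B) by omega),
              if_pos (show (0 : ℕ) = C by omega),
              if_neg (show ¬((0 : ℕ) = D) by omega),
              if_neg (show ¬((4 : ℕ) = A) by omega),
              if_neg (show ¬((4 : ℕ) = B) by omega),
              if_neg (show ¬((4 : ℕ) = C) by omega),
              if_neg (show ¬((4 : ℕ) = D) by omega)]
            omega)
      · by_cases hC3 : C = 3
        · by_cases hD4 : D = 4
          · exact collide_aux n f hinj (0) (4) (by omega) (by omega) (by omega) (by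
              rw [hf (0) (by omega), hf (4) (by omega),
                if_pos (show (0 : ℕ) = A by omega),
                if_neg (show ¬((0 : ℕ) = B) by omega),
                if_neg (show ¬((0 : ℕ) = C) by omega),
                if_neg (show ¬((0 : ℕ) = D) by omega),
                if_neg (show ¬((4 : ℕ) = A) by omega),
                if_neg (show ¬((4 : ℕ) = B) by omega),
                if_neg (show ¬((4 : ℕ) = C) by omega),
                if_pos (show (4 : ℕ) = D by omega)]
              omega)
          · exact collide_aux n f hinj (3) (4) (by omega) (by omega) (by omega) (by
              rw [hf (3) (by omega), hf (4) (by omega),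
                if_neg (show ¬((3 : ℕ) = A) by omega),
                if_neg (show ¬((3 : ℕ) = B) by omega),
                if_pos (show (3 : ℕ) = C by omega),
                if_neg (show ¬((3 : ℕ) = D) by omega),
                if_neg (show ¬((4 : ℕ) = A) by omega),
                if_neg (show ¬((4 : ℕ) = B) by omega),
                if_neg (show ¬((4 : ℕ) = C) by omega),
                if_neg (show ¬((4 : ℕ) = D) by omega)]
              omega)
        · by_cases hD3 : D = 3
          · exact collide_aux n f hinj (0) (2) (by omega) (by omega) (by omega) (by
              rw [hf (0) (by omega), hf (2) (by omega),
                if_pos (show (0 : ℕ) = A by omega),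
                if_neg (show ¬((0 : ℕ) = B) by omega),
                if_neg (show ¬((0 : ℕ) = C) by omega),
                if_neg (show ¬((0 : ℕ) = D) by omega),
                if_neg (show ¬((2 : ℕ) = A) by omega),
                if_neg (show ¬((2 : ℕ) = B) by omega),
                if_pos (show (2 : ℕ) = C by omega),
                if_neg (show ¬((2 : ℕ) = D) by omega)]
              omega)
          · exact collide_aux n f hinj (0) (3) (by omega) (by omega) (by omega) (by
              rw [hf (0) (by omega), hf (3) (by omega),
                if_pos (show (0 : ℕ) = A by omega),
                if_neg (show ¬((0 : ℕ) = B) by omega),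
                if_neg (show ¬((0 : ℕ) = C) by omega),
                if_neg (show ¬((0 : ℕ) = D) by omega),
                if_neg (show ¬((3 : ℕ) = A) by omega),
                if_neg (show ¬((3 : ℕ) = B) by omega),
                if_neg (show ¬((3 : ℕ) = C) by omega),
                if_neg (show ¬((3 : ℕ) = D) by omega)]
              omega)
    · by_cases hA : A = 1
      · by_cases hD1 : D = 1
        · exact collide_aux n f hinj (1) (3) (by omega) (by omega) (by omega) (by
            rw [hf (1) (by omega), hf (3) (by omega),
              if_pos (show (1 : ℕ) = A by omega),
              if_neg (show ¬((1 : ℕ) = B) by omega),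
              if_neg (show ¬((1 : ℕ) = C) by omega),
              if_pos (show (1 : ℕ) = D by omega),
              if_neg (show ¬((3 : ℕ) = A) by omega),
              if_neg (show ¬((3 : ℕ) = B) by omega),
              if_neg (show ¬((3 : ℕ) = C) by omega),
              if_neg (show ¬((3 : ℕ) = D) by omega)]
            omega)
        · by_cases hC1 : C = 1
          · by_cases hD5 : D = 5
            · exact collide_aux n f hinj (4) (5) (by omega) (by omega) (by omega) (by
                rw [hf (4) (by omega), hf (5) (by omega),
                  if_neg (show ¬((4 : ℕ) = A) by omega),
                  if_neg (show ¬((4 : ℕ) = B) by omega),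
                  if_neg (show ¬((4 : ℕ) = C) by omega),
                  if_neg (show ¬((4 : ℕ) = D) by omega),
                  if_neg (show ¬((5 : ℕ) = A) by omega),
                  if_neg (show ¬((5 : ℕ) = B) by omega),
                  if_neg (show ¬((5 : ℕ) = C) by omega),
                  if_pos (show (5 : ℕ) = D by omega)]
                omega)
            · exact collide_aux n f hinj (1) (5) (by omega) (by omega) (by omega) (by
                rw [hf (1) (by omega), hf (5) (by omega),
                  if_pos (show (1 : ℕ) = A by omega),
                  if_neg (show ¬((1 : ℕ) = B) by omega),
                  if_pos (show (1 : ℕ) = C by omega),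
                  if_neg (show ¬((1 : ℕ) = D) by omega),
                  if_neg (show ¬((5 : ℕ) = A) by omega),
                  if_neg (show ¬((5 : ℕ) = B) by omega),
                  if_neg (show ¬((5 : ℕ) = C) by omega),
                  if_neg (show ¬((5 : ℕ) = D) by omega)]
                omega)
          · by_cases hC4 : C = 4
            · by_cases hD5 : D = 5
              · exact collide_aux n f hinj (1) (5) (by omega) (by omega) (by omega) (by
                  rw [hf (1) (by omega), hf (5) (by omega),
                    if_pos (show (1 : ℕ) = A by omega),
                    if_neg (show ¬((1 : ℕ) = B) by omega),
                    if_neg (show ¬((1 : ℕ) = C) by omega),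
                    if_neg (show ¬((1 : ℕ) = D) by omega),
                    if_neg (show ¬((5 : ℕ) = A) by omega),
                    if_neg (show ¬((5 : ℕ) = B) by omega),
                    if_neg (show ¬((5 : ℕ) = C) by omega),
                    if_pos (show (5 : ℕ) = D by omega)]
                  omega)
              · exact collide_aux n f hinj (4) (5) (by omega) (by omega) (by omega) (by
                  rw [hf (4) (by omega), hf (5) (by omega),
                    if_neg (show ¬((4 : ℕ) = A) by omega),
                    if_neg (show ¬((4 : ℕ) = B) by omega),
                    if_pos (show (4 : ℕ) = C by omega),
                    if_neg (show ¬((4 : ℕ) = D) by omega),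
                    if_neg (show ¬((5 : ℕ) = A) by omega),
                    if_neg (show ¬((5 : ℕ) = B) by omega),
                    if_neg (show ¬((5 : ℕ) = C) by omega),
                    if_neg (show ¬((5 : ℕ) = D) by omega)]
                  omega)
            · by_cases hD4 : D = 4
              · by_cases hC3 : C = 3
                · exact collide_aux n f hinj (1) (3) (by omega) (by omega) (by omega) (by
                    rw [hf (1) (by omega), hf (3) (by omega),
                      if_pos (show (1 : ℕ) = A by omega),
                      if_neg (show ¬((1 : ℕ) = B) by omega),
                      if_neg (show ¬((1 : ℕ) = C) by omega),
                      if_neg (show ¬((1 : ℕ) = D) by omega),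
                      if_neg (show ¬((3 : ℕ) = A) by omega),
                      if_neg (show ¬((3 : ℕ) = B) by omega),
                      if_pos (show (3 : ℕ) = C by omega),
                      if_neg (show ¬((3 : ℕ) = D) by omega)]
                    omega)
                · exact collide_aux n f hinj (3) (4) (by omega) (by omega) (by omega) (by
                    rw [hf (3) (by omega), hf (4) (by omega),
                      if_neg (show ¬((3 : ℕ) = A) by omega),
                      if_neg (show ¬((3 : ℕ) = B) by omega),
                      if_neg (show ¬((3 : ℕ) = C) by omega),
                      if_neg (show ¬((3 : ℕ) = D) by omega),
                      if_neg (show ¬((4 : ℕ) = A) by omega),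
                      if_neg (show ¬((4 : ℕ) = B) by omega),
                      if_neg (show ¬((4 : ℕ) = C) by omega),
                      if_pos (show (4 : ℕ) = D by omega)]
                    omega)
              ·
                · exact collide_aux n f hinj (1) (4) (by omega) (by omega) (by omega) (by
                    rw [hf (1) (by omega), hf (4) (by omega),
                      if_pos (show (1 : ℕ) = A by omega),
                      if_neg (show ¬((1 : ℕ) = B) by omega),
                      if_neg (show ¬((1 : ℕ) = C) by omega),
                      if_neg (show ¬((1 : ℕ) = D) by omega),
                      if_neg (show ¬((4 : ℕ) = A) by omega),
                      if_neg (show ¬((4 : ℕ) = B) by omega),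
                      if_neg (show ¬((4 : ℕ) = C) by omega),
                      if_neg (show ¬((4 : ℕ) = D) by omega)]
                    omega)
      · have hA0 : A = 0 := by omega
        by_cases hC0 : C = 0
        · by_cases hD4 : D = 4
          · exact collide_aux n f hinj (3) (4) (by omega) (by omega) (by omega) (by
              rw [hf (3) (by omega), hf (4) (by omega),
                if_neg (show ¬((3 : ℕ) = A) by omega),
                if_neg (show ¬((3 : ℕ) = B) by omega),
                if_neg (show ¬((3 : ℕ) = C) by omega),
                if_neg (show ¬((3 : ℕ) = D) by omega),
                if_neg (show ¬((4 : ℕ) = A) by omega),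
                if_neg (show ¬((4 : ℕ) = B) by omega),
                if_neg (show ¬((4 : ℕ) = C) by omega),
                if_pos (show (4 : ℕ) = D by omega)]
              omega)
          · exact collide_aux n f hinj (0) (4) (by omega) (by omega) (by omega) (by
              rw [hf (0) (by omega), hf (4) (by omega),
                if_pos (show (0 : ℕ) = A by omega),
                if_neg (show ¬((0 : ℕ) = B) by omega),
                if_pos (show (0 : ℕ) = C by omega),
                if_neg (show ¬((0 : ℕ) = D) by omega),
                if_neg (show ¬((4 : ℕ) = A) by omega),
                if_neg (show ¬((4 : ℕ) = B) by omega),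
                if_neg (show ¬((4 : ℕ) = C) by omega),
                if_neg (show ¬((4 : ℕ) = D) by omega)]
              omega)
        · by_cases hC3 : C = 3
          · by_cases hD4 : D = 4
            · exact collide_aux n f hinj (0) (4) (by omega) (by omega) (by omega) (by
                rw [hf (0) (by omega), hf (4) (by omega),
                  if_pos (show (0 : ℕ) = A by omega),
                  if_neg (show ¬((0 : ℕ) = B) by omega),
                  if_neg (show ¬((0 : ℕ) = C) by omega),
                  if_neg (show ¬((0 : ℕ) = D) by omega),
                  if_neg (show ¬((4 : ℕ) = A) by omega),
                  if_neg (show ¬((4 : ℕ) = B) by omega),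
                  if_neg (show ¬((4 : ℕ) = C) by omega),
                  if_pos (show (4 : ℕ) = D by omega)]
                omega)
            · exact collide_aux n f hinj (3) (4) (by omega) (by omega) (by omega) (by
                rw [hf (3) (by omega), hf (4) (by omega),
                  if_neg (show ¬((3 : ℕ) = A) by omega),
                  if_neg (show ¬((3 : ℕ) = B) by omega),
                  if_pos (show (3 : ℕ) = C by omega),
                  if_neg (show ¬((3 : ℕ) = D) by omega),
                  if_neg (show ¬((4 : ℕ) = A) by omega),
                  if_neg (show ¬((4 : ℕ) = B) by omega),
                  if_neg (show ¬((4 : ℕ) = C) by omega),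
                  if_neg (show ¬((4 : ℕ) = D) by omega)]
                omega)
          · by_cases hD3 : D = 3
            · exact collide_aux n f hinj (1) (3) (by omega) (by omega) (by omega) (by
                rw [hf (1) (by omega), hf (3) (by omega),
                  if_neg (show ¬((1 : ℕ) = A) by omega),
                  if_neg (show ¬((1 : ℕ) = B) by omega),
                  if_pos (show (1 : ℕ) = C by omega),
                  if_neg (show ¬((1 : ℕ) = D) by omega),
                  if_neg (show ¬((3 : ℕ) = A) by omega),
                  if_neg (show ¬((3 : ℕ) = B) by omega),
                  if_neg (show ¬((3 : ℕ) = C) by omega),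
                  if_pos (show (3 : ℕ) = D by omega)]
                omega)
            · exact collide_aux n f hinj (0) (3) (by omega) (by omega) (by omega) (by
                rw [hf (0) (by omega), hf (3) (by omega),
                  if_pos (show (0 : ℕ) = A by omega),
                  if_neg (show ¬((0 : ℕ) = B) by omega),
                  if_neg (show ¬((0 : ℕ) = C) by omega),
                  if_neg (show ¬((0 : ℕ) = D) by omega),
                  if_neg (show ¬((3 : ℕ) = A) by omega),
                  if_neg (show ¬((3 : ℕ) = B) by omega),
                  if_neg (show ¬((3 : ℕ) = C) by omega),
                  if_neg (show ¬((3 : ℕ) = D) by omega)]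
                omega)

lemma lower_aux (n A B C D : ℕ) (f : ℕ → ℤ) (hn : 6 ≤ n)
    (hAB : A < B) (hCD : C < D) (hBn : B < n) (hDn : D < n)
    (hne : ¬(A = C ∧ B = D))
    (hf : ∀ m, m < n → f m = (n : ℤ) - 1 - m
      - (if m = A then 3 else 0) + (if m = B then 3 else 0)
      - (if m = C then 1 else 0) + (if m = D then 1 else 0))
    (hinj : ∀ m1 m2, m1 < n → m2 < n → f m1 = f m2 → m1 = m2) :
    ∀ m, m < n → 0 ≤ f m := by
  intro m hm
  have hf' : ∀ m', m' < n → (fun m' => (n : ℤ) - 1 - f (n - 1 - m')) m' = (n : ℤ) - 1 - m'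
      - (if m' = n - 1 - B then 3 else 0) + (if m' = n - 1 - A then 3 else 0)
      - (if m' = n - 1 - D then 1 else 0) + (if m' = n - 1 - C then 1 else 0) := by
    intro m' hm'
    simp only
    rw [hf (n - 1 - m') (by omega)]
    simp only [show (n - 1 - m' = A) = (m' = n - 1 - A) from propext (by omega),
      show (n - 1 - m' = B) = (m' = n - 1 - B) from propext (by omega),
      show (n - 1 - m' = C) = (m' = n - 1 - C) from propext (by omega),
      show (n - 1 - m' = D) = (m' = n - 1 - D) from propext (by omega)]
    split_ifs <;> omega
  have hinj' : ∀ m1 m2, m1 < n → m2 < n →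
      (fun m' => (n : ℤ) - 1 - f (n - 1 - m')) m1 = (fun m' => (n : ℤ) - 1 - f (n - 1 - m')) m2 →
      m1 = m2 := by
    intro m1 m2 h1 h2 he
    simp only at he
    have he' : f (n - 1 - m1) = f (n - 1 - m2) := by linarith
    have := hinj _ _ (by omega) (by omega) he'
    omega
  have key := upper_aux n (n - 1 - B) (n - 1 - A) (n - 1 - D) (n - 1 - C)
    (fun m' => (n : ℤ) - 1 - f (n - 1 - m')) hn (by omega) (by omega) (by omega) (by omega)
    (fun ⟨h1, h2⟩ => hne ⟨by omega, by omega⟩) hf' hinj' (n - 1 - m) (by omega)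
  rw [show n - 1 - (n - 1 - m) = m by omega] at key
  linarith

/-- For n ≥ 6 and distinct positive roots α, β of A_{n−1},
if w·(−3α−β) is dominant then it is zero. -/
theorem dot_neg_3a_b_dominant_eq_zero (n : ℕ) (hn : 6 ≤ n) (α β : Fin n → ℤ)
    (hα : IsPosRoot α) (hβ : IsPosRoot β) (hne : α ≠ β) (w : Equiv.Perm (Fin n))
    (hdom : IsDominant (dotAct w (-(3 • α) - β))) :
    dotAct w (-(3 • α) - β) = 0 := by
  obtain ⟨a, b, hab, rfl⟩ := hα
  obtain ⟨c, d, hcd, rfl⟩ := hβ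
  set lam : Fin n → ℤ := -(3 • posRoot a b) - posRoot c d with hlam
  have hlamval : ∀ k : Fin n, lam k = -(if k = a then (3:ℤ) else 0) + (if k = b then 3 else 0)
      - (if k = c then 1 else 0) + (if k = d then 1 else 0) := by
    intro k
    show -(3 • (posRoot a b k)) - posRoot c d k = _
    unfold posRoot
    split_ifs <;> norm_num
  -- injectivity of k ↦ lam k + ρ k
  have hinjFin : ∀ i j : Fin n, lam i + weylRho n i = lam j + weylRho n j → i = j := by
    intro i j hij
    have e1 : dotAct w lam (w i) = lam i + weylRho n i - weylRho n (w i) := by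
      simp [dotAct]
    have e2 : dotAct w lam (w j) = lam j + weylRho n j - weylRho n (w j) := by
      simp [dotAct]
    have key : ∀ u v : Fin n, w u ≤ w v →
        lam u + weylRho n u = lam v + weylRho n v → u = v := by
      intro u v huv he
      have h := hdom (w u) (w v) huv
      have eu : dotAct w lam (w u) = lam u + weylRho n u - weylRho n (w u) := by
        simp [dotAct]
      have ev : dotAct w lam (w v) = lam v + weylRho n v - weylRho n (w v) := by
        simp [dotAct]
      rw [eu, ev, he] at h
      have hr : weylRho n (w u) ≤ weylRho n (w v) := by linarith
      have hval : ((w v : ℕ) : ℤ) ≤ ((w u : ℕ) : ℤ) := by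
        simp only [weylRho] at hr; linarith
      have : w u = w v := le_antisymm huv (Fin.le_def.mpr (by exact_mod_cast hval))
      exact w.injective this
    rcases le_total (w i) (w j) with h | h
    · exact key i j h hij
    · exact (key j i h hij.symm).symm
  -- numeric version
  set F : ℕ → ℤ := fun m => if h : m < n then lam ⟨m, h⟩ + weylRho n ⟨m, h⟩ else 0 with hF
  have hFval : ∀ m (hm : m < n), F m = lam ⟨m, hm⟩ + weylRho n ⟨m, hm⟩ := by
    intro m hm; simp only [hF, dif_pos hm]
  have hfeq : ∀ m, m < n → F m = (n : ℤ) - 1 - m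
      - (if m = (a : ℕ) then 3 else 0) + (if m = (b : ℕ) then 3 else 0)
      - (if m = (c : ℕ) then 1 else 0) + (if m = (d : ℕ) then 1 else 0) := by
    intro m hm
    rw [hFval m hm, hlamval]
    simp only [weylRho]
    simp only [show ∀ (x : Fin n), ((⟨m, hm⟩ : Fin n) = x) = (m = (x : ℕ)) from
      fun x => propext ⟨fun h => by rw [← h], fun h => Fin.ext h⟩]
    ring
  have hinjN : ∀ m1 m2, m1 < n → m2 < n → F m1 = F m2 → m1 = m2 := by
    intro m1 m2 h1 h2 he
    rw [hFval m1 h1, hFval m2 h2] at he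
    simpa using congrArg Fin.val (hinjFin _ _ he)
  have habN : (a : ℕ) < (b : ℕ) := hab
  have hcdN : (c : ℕ) < (d : ℕ) := hcd
  have hneN : ¬((a : ℕ) = (c : ℕ) ∧ (b : ℕ) = (d : ℕ)) := by
    rintro ⟨h1, h2⟩
    exact hne (by rw [show a = c from Fin.ext h1, show b = d from Fin.ext h2])
  have hub := upper_aux n a b c d F hn habN hcdN b.isLt d.isLt hneN hfeq hinjN
  have hlb := lower_aux n a b c d F hn habN hcdN b.isLt d.isLt hneN hfeq hinjN
  have hbnd : ∀ k : Fin n, 0 ≤ lam k + weylRho n k ∧ lam k + weylRho n k ≤ (n : ℤ) - 1 := by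
    intro k
    have h1 := hlb k k.isLt
    have h2 := hub k k.isLt
    rw [hFval k k.isLt] at h1 h2
    simp only [Fin.eta] at h1 h2
    exact ⟨h1, h2⟩
  -- conclusion
  funext i
  obtain ⟨i0, hi0⟩ : ∃ i0 : Fin n, (i0 : ℕ) = 0 := ⟨⟨0, by omega⟩, rfl⟩
  obtain ⟨iL, hiL⟩ : ∃ iL : Fin n, (iL : ℕ) = n - 1 := ⟨⟨n - 1, by omega⟩, rfl⟩
  have h1 := hdom i0 i (Fin.le_def.mpr (by omega))
  have h2 := hdom i iL (Fin.le_def.mpr (by have := i.isLt; omega))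
  simp only [dotAct, weylRho] at h1 h2 ⊢
  have b1 := hbnd (w⁻¹ i)
  have b2 := hbnd (w⁻¹ i0)
  have b3 := hbnd (w⁻¹ iL)
  simp only [weylRho] at b1 b2 b3
  have hc0 : ((i0 : ℕ) : ℤ) = 0 := by omega
  have hcL : ((iL : ℕ) : ℤ) = (n : ℤ) - 1 := by omega
  have hci : ((i : ℕ) : ℤ) ≤ (n : ℤ) - 1 := by have := i.isLt; omega
  show dotAct w lam i = (0 : Fin n → ℤ) i
  simp only [dotAct, weylRho, Pi.zero_apply]
  linarith [b1.1, b1.2, b2.1, b2.2, b3.1, b3.2]
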